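/- arXiv:1607.04028 — 2 statements merged into one kernel-verified Lean document; each statement's English description precedes it below -/
import Mathlib

section
/- Let n ≥ 2, let σ be a scattering kernel with lower bound σ₀ > 0 and let p be a path-length density. Suppose u ∈ L^∞(0,∞; L²(ℝⁿ × S^{n-1})) satisfies u ≥ 0 a.e. and u(s,x,v) = ∫₀^∞ ∫_{S^{n-1}} σ(v·v') p(τ) u(τ,x,v') dv' dτ for a.e. (s,x,v) ∈ (0,∞) × ℝⁿ × S^{n-1}. Then u is a.e. independent of s and v: there exists U ∈ L²(ℝⁿ) with u(s,x,v) = U(x) for a.e. (s,x,v). -/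
open MeasureTheory Metric Filter Set
open scoped ENNReal

noncomputable section

/-- Euclidean space `ℝⁿ`. -/
abbrev Euc (n : ℕ) := EuclideanSpace ℝ (Fin n)

/-- The unit sphere `S^{n-1}` in `ℝⁿ`. -/
abbrev Sph (n : ℕ) := Metric.sphere (0 : Euc n) 1

/-- The normalized surface measure on the unit sphere (total mass `1`): the surface
measure divided by its total mass. -/
noncomputable def sphμ (n : ℕ) : Measure (Sph n) :=
  ((volume : Measure (Euc n)).toSphere Set.univ)⁻¹ • (volume : Measure (Euc n)).toSphere

/-- A scattering kernel `σ` with lower bound `σ₀`: measurable, bounded below by `σ₀ > 0`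
on `[-1,1]`, and with unit angular integral `∫_{S^{n-1}} σ(v·v') dv = 1` for every `v'`. -/
def IsScatteringKernel (n : ℕ) (σ₀ : ℝ) (σ : ℝ → ℝ) : Prop :=
  Measurable σ ∧ 0 < σ₀ ∧ (∀ μ ∈ Set.Icc (-1 : ℝ) 1, σ₀ ≤ σ μ) ∧
    ∀ v' : Sph n, ∫ v, σ (inner ℝ (v : Euc n) (v' : Euc n)) ∂(sphμ n) = 1

/-- A path-length density: measurable, nonnegative, integrating to one on `(0,∞)`, with
finite first moment. -/
def IsPathDensity (p : ℝ → ℝ) : Prop :=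
  Measurable p ∧ (∀ s, 0 ≤ p s) ∧ (∫ s in Set.Ioi (0 : ℝ), p s = 1) ∧
    IntegrableOn (fun s => s * p s) (Set.Ioi (0 : ℝ))

/-- The norm of `L^∞(0,∞; L^q(ℝⁿ × S^{n-1}))`: essential supremum over `s ∈ (0,∞)` of the
`L^q(ℝⁿ × S^{n-1})` norm of `u(s,·,·)`. -/
noncomputable def mixedNorm (n : ℕ) (q : ℝ≥0∞) (u : ℝ → Euc n → Sph n → ℝ) : ℝ≥0∞ :=
  essSup
    (fun s => eLpNorm (fun xv : Euc n × Sph n => u s xv.1 xv.2) q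
      ((volume : Measure (Euc n)).prod (sphμ n)))
    (volume.restrict (Set.Ioi (0 : ℝ)))

/-- The transport fixed-point equation
`Ψ(s,x,v) = ∫₀^∞ ∫_{S^{n-1}} (σ(v·v') − θ(ε)(1−c)) p(τ) Ψ(τ, x − εvs, v') dv' dτ
  + θ(ε) Q(x − εvs, v)` for a.e. `(s,x,v) ∈ (0,∞) × ℝⁿ × S^{n-1}`. -/
def IsTransportSolution (n : ℕ) (ε θε c : ℝ) (σ p : ℝ → ℝ)
    (Q : Euc n → Sph n → ℝ) (Ψ : ℝ → Euc n → Sph n → ℝ) : Prop :=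
  ∀ᵐ sxv : ℝ × Euc n × Sph n
      ∂((volume.restrict (Set.Ioi (0 : ℝ))).prod ((volume : Measure (Euc n)).prod (sphμ n))),
    Ψ sxv.1 sxv.2.1 sxv.2.2 =
      (∫ τ in Set.Ioi (0 : ℝ), ∫ v' : Sph n,
          (σ (inner ℝ (sxv.2.2 : Euc n) (v' : Euc n)) - θε * (1 - c)) * p τ *
            Ψ τ (sxv.2.1 - (ε * sxv.1) • (sxv.2.2 : Euc n)) v' ∂(sphμ n))
        + θε * Q (sxv.2.1 - (ε * sxv.1) • (sxv.2.2 : Euc n)) sxv.2.2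



/-- Abstract kernel contraction lemma on a probability space. -/
lemma kernel_fixed {V : Type*} [MeasurableSpace V] (μS : Measure V) [IsProbabilityMeasure μS]
    (σ₀ : ℝ) (hσ₀ : 0 < σ₀) (K : V → V → ℝ)
    (hKm : Measurable fun q : V × V => K q.1 q.2)
    (hK0 : ∀ v v', σ₀ ≤ K v v')
    (hK1 : ∀ v', ∫ v, K v v' ∂μS = 1) (hK2 : ∀ v, ∫ v', K v v' ∂μS = 1)
    (f : V → ℝ) (hfm : Measurable f) (hfi : Integrable f μS)
    (heq : ∀ v, f v = ∫ v', K v v' * f v' ∂μS) :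
    ∀ᵐ v ∂μS, f v = ∫ v', f v' ∂μS := by
  have hKnn : ∀ v v', (0:ℝ) ≤ K v v' := fun v v' => hσ₀.le.trans (hK0 v v')
  -- integrability of kernel sections
  have hKint1 : ∀ v', Integrable (fun v => K v v') μS := by
    intro v'
    by_contra h
    have h1 := hK1 v'
    rw [integral_undef h] at h1
    exact one_ne_zero h1.symm
  have hKint2 : ∀ v, Integrable (fun v' => K v v') μS := by
    intro v
    by_contra h
    have h1 := hK2 v
    rw [integral_undef h] at h1
    exact one_ne_zero h1.symm
  set m : ℝ := ∫ v', f v' ∂μS with hm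
  set h : V → ℝ := fun v => f v - m with hh
  have hhm : Measurable h := hfm.sub measurable_const
  have hhi : Integrable h μS := hfi.sub (integrable_const m)
  have hh0 : ∫ v', h v' ∂μS = 0 := by
    rw [hh]
    rw [integral_sub hfi (integrable_const m), integral_const]
    simp [hm]
  -- a.e. integrability of v' ↦ K v v' * f v'
  have hmeasKf : Measurable fun q : V × V => ENNReal.ofReal (K q.1 q.2 * |f q.2|) := by
    exact (hKm.mul ((hfm.comp measurable_snd).abs)).ennreal_ofReal
  have hlin : ∀ v, ∫⁻ v', ENNReal.ofReal (K v' v) ∂μS = 1 := by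
    intro v
    rw [← ofReal_integral_eq_lintegral_ofReal (hKint1 v) (Eventually.of_forall fun v' => hKnn v' v)]
    rw [hK1 v]; simp
  have hlin2 : ∀ v, ∫⁻ v', ENNReal.ofReal (K v v') ∂μS = 1 := by
    intro v
    rw [← ofReal_integral_eq_lintegral_ofReal (hKint2 v) (Eventually.of_forall fun v' => hKnn v v')]
    rw [hK2 v]; simp
  have hfin : ∫⁻ v, ∫⁻ v', ENNReal.ofReal (K v v' * |f v'|) ∂μS ∂μS < ⊤ := by
    rw [lintegral_lintegral_swap hmeasKf.aemeasurable]
    have : ∀ v', ∫⁻ v, ENNReal.ofReal (K v v' * |f v'|) ∂μS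
        = ENNReal.ofReal (|f v'|) := by
      intro v'
      calc ∫⁻ v, ENNReal.ofReal (K v v' * |f v'|) ∂μS
          = ∫⁻ v, ENNReal.ofReal (K v v') * ENNReal.ofReal (|f v'|) ∂μS := by
            congr 1; funext v; rw [ENNReal.ofReal_mul (hKnn v v')]
        _ = (∫⁻ v, ENNReal.ofReal (K v v') ∂μS) * ENNReal.ofReal (|f v'|) := by
            rw [lintegral_mul_const]
            exact (hKm.comp (measurable_id.prodMk measurable_const)).ennreal_ofReal
        _ = ENNReal.ofReal (|f v'|) := by rw [hlin v']; ring
    rw [lintegral_congr this]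
    calc ∫⁻ v', ENNReal.ofReal |f v'| ∂μS = ∫⁻ v', ‖f v'‖₊ ∂μS := by
          congr 1; funext v'; rw [← Real.norm_eq_abs, ofReal_norm_eq_enorm, enorm_eq_nnnorm]
      _ < ⊤ := hfi.2
  have haeint : ∀ᵐ v ∂μS, Integrable (fun v' => K v v' * f v') μS := by
    have hmeas' : Measurable fun v => ∫⁻ v', ENNReal.ofReal (K v v' * |f v'|) ∂μS :=
      Measurable.lintegral_prod_right' hmeasKf
    filter_upwards [ae_lt_top hmeas' hfin.ne] with v hv
    refine ⟨((hKm.comp (measurable_const.prodMk measurable_id)).mul hfm).aestronglyMeasurable, ?_⟩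
    rw [hasFiniteIntegral_iff_norm]
    have : ∀ v', ENNReal.ofReal ‖K v v' * f v'‖ = ENNReal.ofReal (K v v' * |f v'|) := by
      intro v'
      rw [Real.norm_eq_abs, abs_mul, abs_of_nonneg (hKnn v v')]
    simp only [this]
    exact hv
  -- the centered inequality, a.e. in v
  have haeeq : ∀ᵐ v ∂μS, |h v| ≤ ∫ v', (K v v' - σ₀) * |h v'| ∂μS := by
    filter_upwards [haeint] with v hv
    have hKh_int : Integrable (fun v' => K v v' * h v') μS := by
      have e : (fun v' => K v v' * h v') = fun v' => K v v' * f v' - K v v' * m := by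
        funext v'; rw [hh]; ring
      rw [e]; exact hv.sub ((hKint2 v).mul_const m)
    have hKs_int : Integrable (fun v' => (K v v' - σ₀) * h v') μS := by
      have e : (fun v' => (K v v' - σ₀) * h v') = fun v' => K v v' * h v' - σ₀ * h v' := by
        funext v'; ring
      rw [e]; exact hKh_int.sub (hhi.const_mul σ₀)
    have e1 : ∫ v', K v v' * h v' ∂μS = f v - m := by
      have e : (fun v' => K v v' * h v') = fun v' => K v v' * f v' - K v v' * m := by
        funext v'; rw [hh]; ring
      rw [e, integral_sub hv ((hKint2 v).mul_const m), ← heq v, integral_mul_const, hK2 v,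
        one_mul]
    have key : h v = ∫ v', (K v v' - σ₀) * h v' ∂μS := by
      have e : (fun v' => (K v v' - σ₀) * h v') = fun v' => K v v' * h v' - σ₀ * h v' := by
        funext v'; ring
      rw [e, integral_sub hKh_int (hhi.const_mul σ₀), integral_const_mul, hh0, mul_zero,
        sub_zero, e1]
    calc |h v| = |∫ v', (K v v' - σ₀) * h v' ∂μS| := by rw [← key]
      _ ≤ ∫ v', |K v v' - σ₀| * |h v'| ∂μS := by
          simpa [Real.norm_eq_abs, abs_mul] using norm_integral_le_integral_norm
            (fun v' => (K v v' - σ₀) * h v') (μ := μS)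
      _ = ∫ v', (K v v' - σ₀) * |h v'| ∂μS := by
          congr 1; funext v'
          rw [abs_of_nonneg (sub_nonneg.2 (hK0 v v'))]
  -- a.e. integrability of (K - σ₀)|h|
  have haeint2 : ∀ᵐ v ∂μS, Integrable (fun v' => (K v v' - σ₀) * |h v'|) μS := by
    filter_upwards [haeint] with v hv
    have hKh_int : Integrable (fun v' => K v v' * h v') μS := by
      have e : (fun v' => K v v' * h v') = fun v' => K v v' * f v' - K v v' * m := by
        funext v'; rw [hh]; ring
      rw [e]; exact hv.sub ((hKint2 v).mul_const m)
    have hKs_int : Integrable (fun v' => (K v v' - σ₀) * h v') μS := by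
      have e : (fun v' => (K v v' - σ₀) * h v') = fun v' => K v v' * h v' - σ₀ * h v' := by
        funext v'; ring
      rw [e]; exact hKh_int.sub (hhi.const_mul σ₀)
    have e : (fun v' => (K v v' - σ₀) * |h v'|) = fun v' => |(K v v' - σ₀) * h v'| := by
      funext v'; rw [abs_mul, abs_of_nonneg (sub_nonneg.2 (hK0 v v'))]
    rw [e]; exact hKs_int.abs
  -- lintegral contraction
  set I := ∫⁻ v, ENNReal.ofReal |h v| ∂μS with hI
  have hmh : Measurable fun v => ENNReal.ofReal |h v| := hhm.abs.ennreal_ofReal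
  have hIfin : I < ⊤ := by
    rw [hI]
    have e : ∀ v, ENNReal.ofReal |h v| = (‖h v‖₊ : ℝ≥0∞) := by
      intro v; rw [← Real.norm_eq_abs, ofReal_norm_eq_enorm, enorm_eq_nnnorm]
    simp only [e]
    exact hhi.2
  have hIle : I ≤ ENNReal.ofReal (1 - σ₀) * I := by
    have hm2 : Measurable fun q : V × V => ENNReal.ofReal ((K q.1 q.2 - σ₀) * |h q.2|) :=
      ((hKm.sub measurable_const).mul ((hhm.comp measurable_snd).abs)).ennreal_ofReal
    calc I ≤ ∫⁻ v, ENNReal.ofReal (∫ v', (K v v' - σ₀) * |h v'| ∂μS) ∂μS := by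
          refine lintegral_mono_ae ?_
          filter_upwards [haeeq] with v hv
          exact ENNReal.ofReal_le_ofReal hv
      _ = ∫⁻ v, ∫⁻ v', ENNReal.ofReal ((K v v' - σ₀) * |h v'|) ∂μS ∂μS := by
          refine lintegral_congr_ae ?_
          filter_upwards [haeint2] with v hv
          rw [ofReal_integral_eq_lintegral_ofReal hv (Eventually.of_forall fun v' =>
            mul_nonneg (sub_nonneg.2 (hK0 v v')) (abs_nonneg _))]
      _ = ∫⁻ v', ∫⁻ v, ENNReal.ofReal ((K v v' - σ₀) * |h v'|) ∂μS ∂μS := by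
          rw [lintegral_lintegral_swap hm2.aemeasurable]
      _ = ∫⁻ v', ENNReal.ofReal (1 - σ₀) * ENNReal.ofReal |h v'| ∂μS := by
          refine lintegral_congr fun v' => ?_
          calc ∫⁻ v, ENNReal.ofReal ((K v v' - σ₀) * |h v'|) ∂μS
              = ∫⁻ v, ENNReal.ofReal (K v v' - σ₀) * ENNReal.ofReal |h v'| ∂μS := by
                congr 1; funext v; rw [ENNReal.ofReal_mul (sub_nonneg.2 (hK0 v v'))]
            _ = (∫⁻ v, ENNReal.ofReal (K v v' - σ₀) ∂μS) * ENNReal.ofReal |h v'| := by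
                rw [lintegral_mul_const]
                exact ((hKm.comp (measurable_id.prodMk measurable_const)).sub
                  measurable_const).ennreal_ofReal
            _ = ENNReal.ofReal (1 - σ₀) * ENNReal.ofReal |h v'| := by
                congr 1
                have hint : Integrable (fun v => K v v' - σ₀) μS := by
                  exact (hKint1 v').sub (integrable_const σ₀)
                rw [← ofReal_integral_eq_lintegral_ofReal hint
                  (Eventually.of_forall fun v => sub_nonneg.2 (hK0 v v'))]
                congr 1
                rw [integral_sub (hKint1 v') (integrable_const σ₀), hK1 v', integral_const]
                simp
      _ = ENNReal.ofReal (1 - σ₀) * I := by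
          rw [lintegral_const_mul _ hmh]
  have hI0 : I = 0 := by
    by_contra hne
    have hlt : ENNReal.ofReal (1 - σ₀) * I < 1 * I := by
      rw [mul_comm _ I, mul_comm 1 I]
      refine ENNReal.mul_lt_mul_right hne hIfin.ne ?_
      exact ENNReal.ofReal_lt_one.2 (by linarith)
    rw [one_mul] at hlt
    exact absurd hIle (not_le.2 hlt)
  have := (lintegral_eq_zero_iff hmh).1 hI0
  filter_upwards [this] with v hv
  have : |h v| ≤ 0 := by
    by_contra hc
    push_neg at hc
    exact (ENNReal.ofReal_pos.2 hc).ne' hv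
  have : h v = 0 := abs_eq_zero.1 (le_antisymm this (abs_nonneg _))
  change f v - m = 0 at this
  linarith

lemma sphμ_prob (n : ℕ) (hn : 2 ≤ n) : IsProbabilityMeasure (sphμ n) := by
  constructor
  rw [sphμ, Measure.smul_apply, smul_eq_mul]
  have h : (volume : Measure (Euc n)).toSphere Set.univ = n * volume (ball (0:Euc n) 1) := by
    rw [Measure.toSphere_apply_univ]
    congr 1
    simp [finrank_euclideanSpace]
  rw [h]
  have h0 : (0:ℝ≥0∞) < n * volume (ball (0:Euc n) 1) := by
    apply ENNReal.mul_pos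
    · simp; omega
    · exact (measure_ball_pos _ _ one_pos).ne'
  have ht : n * volume (ball (0:Euc n) 1) ≠ ⊤ :=
    (ENNReal.mul_lt_top (ENNReal.natCast_lt_top _) measure_ball_lt_top).ne
  exact ENNReal.inv_mul_cancel h0.ne' ht


set_option maxHeartbeats 1000000 in
/-- nonnegative fixed points of the averaging operator are independent
of `s` and `v`. -/
theorem averaging_fixed_point_constant
    (n : ℕ) (hn : 2 ≤ n) (σ₀ : ℝ)
    (σ p : ℝ → ℝ) (hσ : IsScatteringKernel n σ₀ σ) (hp : IsPathDensity p)
    (u : ℝ → Euc n → Sph n → ℝ)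
    (hum : Measurable fun sxv : ℝ × Euc n × Sph n => u sxv.1 sxv.2.1 sxv.2.2)
    (hunorm : mixedNorm n 2 u < ⊤)
    (hupos : ∀ᵐ sxv : ℝ × Euc n × Sph n
        ∂((volume.restrict (Set.Ioi (0 : ℝ))).prod ((volume : Measure (Euc n)).prod (sphμ n))),
      0 ≤ u sxv.1 sxv.2.1 sxv.2.2)
    (hufix : ∀ᵐ sxv : ℝ × Euc n × Sph n
        ∂((volume.restrict (Set.Ioi (0 : ℝ))).prod ((volume : Measure (Euc n)).prod (sphμ n))),
      u sxv.1 sxv.2.1 sxv.2.2 =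
        ∫ τ in Set.Ioi (0 : ℝ), ∫ v' : Sph n,
          σ (inner ℝ (sxv.2.2 : Euc n) (v' : Euc n)) * p τ * u τ sxv.2.1 v' ∂(sphμ n)) :
    ∃ U : Euc n → ℝ, MemLp U 2 (volume : Measure (Euc n)) ∧
      (∀ᵐ sxv : ℝ × Euc n × Sph n
          ∂((volume.restrict (Set.Ioi (0 : ℝ))).prod ((volume : Measure (Euc n)).prod (sphμ n))),
        u sxv.1 sxv.2.1 sxv.2.2 = U sxv.2.1) := by
  haveI hP : IsProbabilityMeasure (sphμ n) := sphμ_prob n hn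
  obtain ⟨hσm, hσ₀, hσlb, hσint⟩ := hσ
  obtain ⟨hpm, hpnn, hpint, hpmom⟩ := hp
  -- kernel facts
  have hnorm1 : ∀ v : Sph n, ‖(v : Euc n)‖ = 1 := by
    intro v
    have hv := v.2
    rwa [mem_sphere_iff_norm, sub_zero] at hv
  have hIcc : ∀ v v' : Sph n, inner ℝ (v : Euc n) (v' : Euc n) ∈ Set.Icc (-1 : ℝ) 1 := by
    intro v v'
    have h := abs_real_inner_le_norm (v : Euc n) (v' : Euc n)
    rw [hnorm1, hnorm1, mul_one] at h
    exact abs_le.1 h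
  have hK0 : ∀ v v' : Sph n, σ₀ ≤ σ (inner ℝ (v : Euc n) (v' : Euc n)) :=
    fun v v' => hσlb _ (hIcc v v')
  have hKm : Measurable fun q : Sph n × Sph n => σ (inner ℝ (q.1 : Euc n) (q.2 : Euc n)) := by
    apply hσm.comp
    exact ((continuous_subtype_val.comp continuous_fst).inner
      (continuous_subtype_val.comp continuous_snd)).measurable
  have hK2 : ∀ v : Sph n, ∫ v', σ (inner ℝ (v : Euc n) (v' : Euc n)) ∂(sphμ n) = 1 := by
    intro v
    calc ∫ v', σ (inner ℝ (v : Euc n) (v' : Euc n)) ∂(sphμ n)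
        = ∫ v', σ (inner ℝ (v' : Euc n) (v : Euc n)) ∂(sphμ n) := by
          congr 1; funext v'; rw [real_inner_comm]
      _ = 1 := hσint v
  -- the fixed-point function F
  set F : Euc n → Sph n → ℝ := fun x v =>
    ∫ τ in Set.Ioi (0 : ℝ), ∫ v' : Sph n,
      σ (inner ℝ (v : Euc n) (v' : Euc n)) * p τ * u τ x v' ∂(sphμ n) with hFdef
  -- measurability of F
  have hGm : StronglyMeasurable (fun q : (ℝ × (Euc n × Sph n)) × Sph n =>
      σ (inner ℝ (q.1.2.2 : Euc n) (q.2 : Euc n)) * p q.1.1 * u q.1.1 q.1.2.1 q.2) := by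
    apply Measurable.stronglyMeasurable
    refine Measurable.mul (Measurable.mul ?_ ?_) ?_
    · exact hKm.comp ((measurable_fst.snd.snd).prodMk measurable_snd)
    · exact hpm.comp measurable_fst.fst
    · exact hum.comp ((measurable_fst.fst).prodMk
        ((measurable_fst.snd.fst).prodMk measurable_snd))
  have hGm2 : StronglyMeasurable (fun q : ((Euc n × Sph n) × ℝ) × Sph n =>
      σ (inner ℝ (q.1.1.2 : Euc n) (q.2 : Euc n)) * p q.1.2 * u q.1.2 q.1.1.1 q.2) := by
    apply Measurable.stronglyMeasurable
    refine Measurable.mul (Measurable.mul ?_ ?_) ?_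
    · exact hKm.comp ((measurable_fst.fst.snd).prodMk measurable_snd)
    · exact hpm.comp measurable_fst.snd
    · exact hum.comp ((measurable_fst.snd).prodMk
        ((measurable_fst.fst.fst).prodMk measurable_snd))
  have hH2 : StronglyMeasurable (fun q : (Euc n × Sph n) × ℝ =>
      ∫ v' : Sph n, σ (inner ℝ (q.1.2 : Euc n) (v' : Euc n)) * p q.2 * u q.2 q.1.1 v'
        ∂(sphμ n)) := hGm2.integral_prod_right'
  have hFm : StronglyMeasurable (fun xv : Euc n × Sph n => F xv.1 xv.2) :=
    hH2.integral_prod_right' (ν := volume.restrict (Set.Ioi (0 : ℝ)))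
  have hA : ∀ᵐ sxv ∂((volume.restrict (Set.Ioi (0 : ℝ))).prod
      ((volume : Measure (Euc n)).prod (sphμ n))),
      u sxv.1 sxv.2.1 sxv.2.2 = F sxv.2.1 sxv.2.2 := hufix
  -- F is in L² of the product
  have hμ1ne : (volume.restrict (Set.Ioi (0 : ℝ))) ≠ 0 := by
    intro h0
    have h1 : (volume.restrict (Set.Ioi (0 : ℝ))) (Set.Ioi (0 : ℝ)) = volume (Set.Ioi (0 : ℝ)) :=
      Measure.restrict_apply_self _ _
    rw [h0] at h1
    simp [Real.volume_Ioi] at h1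
  haveI : (ae (volume.restrict (Set.Ioi (0 : ℝ)))).NeBot := ae_neBot.2 hμ1ne
  have hbound : ∀ᵐ s ∂(volume.restrict (Set.Ioi (0 : ℝ))),
      eLpNorm (fun xv : Euc n × Sph n => u s xv.1 xv.2) 2
        ((volume : Measure (Euc n)).prod (sphμ n)) ≤ mixedNorm n 2 u :=
    ENNReal.ae_le_essSup _
  have hAiter := Measure.ae_ae_of_ae_prod hA
  obtain ⟨s0, hs1, hs2⟩ := (hAiter.and hbound).exists
  have hFmem : MemLp (fun xv : Euc n × Sph n => F xv.1 xv.2) 2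
      ((volume : Measure (Euc n)).prod (sphμ n)) := by
    refine ⟨hFm.aestronglyMeasurable, ?_⟩
    have he : eLpNorm (fun xv : Euc n × Sph n => F xv.1 xv.2) 2
        ((volume : Measure (Euc n)).prod (sphμ n))
        = eLpNorm (fun xv : Euc n × Sph n => u s0 xv.1 xv.2) 2
          ((volume : Measure (Euc n)).prod (sphμ n)) :=
      eLpNorm_congr_ae (hs1.mono fun xv hxv => hxv.symm)
    rw [he]
    exact lt_of_le_of_lt hs2 hunorm
  -- rearrange the a.e. statement
  have hMP : MeasurePreserving (fun w : Euc n × (ℝ × Sph n) => (w.2.1, (w.1, w.2.2)))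
      ((volume : Measure (Euc n)).prod
        ((volume.restrict (Set.Ioi (0 : ℝ))).prod (sphμ n)))
      ((volume.restrict (Set.Ioi (0 : ℝ))).prod
        ((volume : Measure (Euc n)).prod (sphμ n))) := by
    have h1 : MeasurePreserving (MeasurableEquiv.prodAssoc.symm :
        Euc n × (ℝ × Sph n) ≃ᵐ (Euc n × ℝ) × Sph n)
        ((volume : Measure (Euc n)).prod
          ((volume.restrict (Set.Ioi (0 : ℝ))).prod (sphμ n)))
        (((volume : Measure (Euc n)).prod (volume.restrict (Set.Ioi (0 : ℝ)))).prod (sphμ n)) :=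
      (measurePreserving_prodAssoc _ _ _).symm _
    have h2 : MeasurePreserving
        (Prod.map (Prod.swap : Euc n × ℝ → ℝ × Euc n) (id : Sph n → Sph n))
        (((volume : Measure (Euc n)).prod (volume.restrict (Set.Ioi (0 : ℝ)))).prod (sphμ n))
        (((volume.restrict (Set.Ioi (0 : ℝ))).prod (volume : Measure (Euc n))).prod (sphμ n)) :=
      Measure.measurePreserving_swap.prod (MeasurePreserving.id _)
    have h3 : MeasurePreserving (MeasurableEquiv.prodAssoc :
        (ℝ × Euc n) × Sph n ≃ᵐ ℝ × (Euc n × Sph n))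
        (((volume.restrict (Set.Ioi (0 : ℝ))).prod (volume : Measure (Euc n))).prod (sphμ n))
        ((volume.restrict (Set.Ioi (0 : ℝ))).prod
          ((volume : Measure (Euc n)).prod (sphμ n))) :=
      measurePreserving_prodAssoc _ _ _
    exact (h3.comp h2).comp h1
  have hB0 : ∀ᵐ w ∂((volume : Measure (Euc n)).prod
      ((volume.restrict (Set.Ioi (0 : ℝ))).prod (sphμ n))),
      u w.2.1 w.1 w.2.2 = F w.1 w.2.2 :=
    hMP.quasiMeasurePreserving.tendsto_ae.eventually hA
  have hB : ∀ᵐ x ∂(volume : Measure (Euc n)),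
      ∀ᵐ τ ∂(volume.restrict (Set.Ioi (0 : ℝ))), ∀ᵐ v' ∂(sphμ n), u τ x v' = F x v' :=
    (Measure.ae_ae_of_ae_prod hB0).mono fun x hx => Measure.ae_ae_of_ae_prod hx
  -- sections of F are integrable on the sphere
  have hFsecMeas : ∀ x : Euc n, Measurable (fun v => F x v) := by
    intro x
    have h1 : Measurable ((fun xv : Euc n × Sph n => F xv.1 xv.2) ∘ (Prod.mk x)) :=
      hFm.measurable.comp measurable_prodMk_left
    exact h1
  have hFsq : Integrable (fun xv : Euc n × Sph n => (F xv.1 xv.2) ^ 2)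
      ((volume : Measure (Euc n)).prod (sphμ n)) := hFmem.integrable_sq
  have hFsecInt : ∀ᵐ x ∂(volume : Measure (Euc n)), Integrable (fun v => F x v) (sphμ n) := by
    filter_upwards [hFsq.prod_right_ae] with x hx
    exact ((memLp_two_iff_integrable_sq
      (hFsecMeas x).aestronglyMeasurable).2 hx).integrable one_le_two
  -- the sphere-kernel fixed point equation, a.e. in x
  have hC : ∀ᵐ x ∂(volume : Measure (Euc n)),
      ∀ᵐ v ∂(sphμ n), F x v = ∫ v', F x v' ∂(sphμ n) := by
    filter_upwards [hB, hFsecInt] with x hx hxi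
    have heqx : ∀ v : Sph n,
        F x v = ∫ v', σ (inner ℝ (v : Euc n) (v' : Euc n)) * F x v' ∂(sphμ n) := by
      intro v
      have step1 : F x v = ∫ τ in Set.Ioi (0 : ℝ),
          p τ * ∫ v', σ (inner ℝ (v : Euc n) (v' : Euc n)) * F x v' ∂(sphμ n) := by
        refine integral_congr_ae ?_
        filter_upwards [hx] with τ hτ
        calc ∫ v', σ (inner ℝ (v : Euc n) (v' : Euc n)) * p τ * u τ x v' ∂(sphμ n)
            = ∫ v', p τ * (σ (inner ℝ (v : Euc n) (v' : Euc n)) * F x v') ∂(sphμ n) := by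
              refine integral_congr_ae ?_
              filter_upwards [hτ] with v' hv'
              rw [hv']; ring
          _ = p τ * ∫ v', σ (inner ℝ (v : Euc n) (v' : Euc n)) * F x v' ∂(sphμ n) :=
              integral_const_mul _ _
      rw [step1, integral_mul_const, hpint, one_mul]
    exact kernel_fixed (sphμ n) σ₀ hσ₀
      (fun v v' => σ (inner ℝ (v : Euc n) (v' : Euc n))) hKm hK0
      (fun v' => hσint v') hK2 (fun v => F x v) (hFsecMeas x) hxi heqx
  -- the candidate limit function
  set g : Euc n → ℝ := fun x => ∫ v', F x v' ∂(sphμ n) with hgdef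
  have hgm : StronglyMeasurable g :=
    hFm.integral_prod_right' (ν := sphμ n)
  have hDset : MeasurableSet {xv : Euc n × Sph n | F xv.1 xv.2 = g xv.1} :=
    measurableSet_eq_fun hFm.measurable (hgm.measurable.comp measurable_fst)
  have hDprod : ∀ᵐ xv ∂((volume : Measure (Euc n)).prod (sphμ n)), F xv.1 xv.2 = g xv.1 :=
    (Measure.ae_prod_iff_ae_ae hDset).2 hC
  have hgoal2 : ∀ᵐ sxv ∂((volume.restrict (Set.Ioi (0 : ℝ))).prod
      ((volume : Measure (Euc n)).prod (sphμ n))), F sxv.2.1 sxv.2.2 = g sxv.2.1 := by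
    have hset2 : MeasurableSet {sxv : ℝ × (Euc n × Sph n) | F sxv.2.1 sxv.2.2 = g sxv.2.1} :=
      measurableSet_eq_fun (hFm.measurable.comp measurable_snd)
        (hgm.measurable.comp (measurable_fst.comp measurable_snd))
    exact (Measure.ae_prod_iff_ae_ae hset2).2 (Eventually.of_forall fun s => hDprod)
  -- g is in L²
  have hgν : MemLp (fun xv : Euc n × Sph n => g xv.1) 2
      ((volume : Measure (Euc n)).prod (sphμ n)) := hFmem.ae_eq hDprod
  have hgmem : MemLp g 2 (volume : Measure (Euc n)) := by
    have hmap : ((volume : Measure (Euc n)).prod (sphμ n)).map Prod.fst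
        = (volume : Measure (Euc n)) := by
      rw [Measure.map_fst_prod, measure_univ, one_smul]
    have h1 : MemLp g 2 (((volume : Measure (Euc n)).prod (sphμ n)).map Prod.fst) := by
      refine (memLp_map_measure_iff ?_ measurable_fst.aemeasurable).2 hgν
      rw [hmap]
      exact hgm.aestronglyMeasurable
    rwa [hmap] at h1
  refine ⟨g, hgmem, ?_⟩
  filter_upwards [hA, hgoal2] with sxv h1 h2
  rw [h1, h2]
end
end

section
/- Let n ≥ 2 and let σ be a scattering kernel with lower bound σ₀ > 0. If u ∈ L²(S^{n-1}) satisfies u(v) = ∫_{S^{n-1}} σ(v·v') u(v') dv' for a.e. v ∈ S^{n-1}, then u is a.e. equal to a constant. Equivalently, the null space of L = I − K, where (K u)(v) = ∫_{S^{n-1}} σ(v·v') u(v') dv', is the span of the constant function 1. -/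
open MeasureTheory Metric Filter Set
open scoped ENNReal

noncomputable section

/-- Lemma 4.4(2): the null space of `L = I − K` consists of the
constant functions. -/
theorem scattering_null_space
    (n : ℕ) (hn : 2 ≤ n) (σ₀ : ℝ)
    (σ : ℝ → ℝ) (hσ : IsScatteringKernel n σ₀ σ)
    (u : Sph n → ℝ) (hu : MemLp u 2 (sphμ n))
    (hfix : ∀ᵐ v ∂(sphμ n),
      u v = ∫ v' : Sph n, σ (inner ℝ (v : Euc n) (v' : Euc n)) * u v' ∂(sphμ n)) :
    ∃ a : ℝ, u =ᵐ[sphμ n] fun _ => a := by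
  obtain ⟨hσm, hσ0, hσlb, hσint⟩ := hσ
  set μ := sphμ n with hμdef
  have hfin : IsFiniteMeasure μ := by
    constructor
    rw [hμdef, sphμ, Measure.smul_apply, smul_eq_mul]
    exact lt_of_le_of_lt (ENNReal.inv_mul_le_one _) ENNReal.one_lt_top
  rcases eq_or_ne μ 0 with hμ0 | hμ0
  · exact ⟨0, by simp [Filter.EventuallyEq, hμ0]⟩
  haveI : (ae μ).NeBot := ae_neBot.mpr hμ0
  -- measurable representative of `u`
  obtain ⟨f, hfm, hf⟩ : ∃ f, StronglyMeasurable f ∧ u =ᵐ[μ] f :=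
    ⟨hu.1.mk u, hu.1.stronglyMeasurable_mk, hu.1.ae_eq_mk⟩
  have hfmeas : Measurable f := hfm.measurable
  have hfL2 : MemLp f 2 μ := hu.ae_eq hf
  have hsq : Integrable (fun x => f x ^ 2) μ := hfL2.integrable_sq
  -- the kernel on the product space
  set K : Sph n × Sph n → ℝ := fun p => σ (inner ℝ (p.1 : Euc n) (p.2 : Euc n)) with hKdef
  have hKcont : Continuous fun p : Sph n × Sph n => (inner ℝ (p.1 : Euc n) (p.2 : Euc n) : ℝ) :=
    (continuous_subtype_val.comp continuous_fst).inner
      (continuous_subtype_val.comp continuous_snd)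
  have hKmeas : Measurable K := hσm.comp hKcont.measurable
  have hKlb : ∀ p, σ₀ ≤ K p := by
    rintro ⟨v, v'⟩
    apply hσlb
    have h1 : ‖(v : Euc n)‖ = 1 := by simpa using mem_sphere_zero_iff_norm.mp v.2
    have h2 : ‖(v' : Euc n)‖ = 1 := by simpa using mem_sphere_zero_iff_norm.mp v'.2
    have habs := abs_real_inner_le_norm (v : Euc n) (v' : Euc n)
    rw [h1, h2, mul_one] at habs
    exact abs_le.mp habs
  have hK0 : ∀ p, 0 ≤ K p := fun p => hσ0.le.trans (hKlb p)
  -- marginal integrals of the kernel are 1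
  have hA : ∀ v' : Sph n, ∫ v, K (v, v') ∂μ = 1 := hσint
  have hB : ∀ v : Sph n, ∫ v', K (v, v') ∂μ = 1 := by
    intro v
    have : (fun v' : Sph n => K (v, v')) =
        fun v' : Sph n => σ (inner ℝ (v' : Euc n) (v : Euc n)) := by
      funext v'; exact congrArg σ (real_inner_comm _ _)
    rw [this]; exact hσint v
  have hAint : ∀ v', Integrable (fun v => K (v, v')) μ :=
    fun v' => integrable_of_integral_eq_one (hA v')
  have hBint : ∀ v, Integrable (fun v' => K (v, v')) μ :=
    fun v => integrable_of_integral_eq_one (hB v)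
  have hAlin : ∀ v', ∫⁻ v, ENNReal.ofReal (K (v, v')) ∂μ = 1 := by
    intro v'
    rw [← ofReal_integral_eq_lintegral_ofReal (hAint v') (ae_of_all _ fun v => hK0 _),
      hA v', ENNReal.ofReal_one]
  have hBlin : ∀ v, ∫⁻ v', ENNReal.ofReal (K (v, v')) ∂μ = 1 := by
    intro v
    rw [← ofReal_integral_eq_lintegral_ofReal (hBint v) (ae_of_all _ fun v' => hK0 _),
      hB v, ENNReal.ofReal_one]
  have hsqlin : ∫⁻ x, ENNReal.ofReal (f x ^ 2) ∂μ < ⊤ := by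
    rw [← ofReal_integral_eq_lintegral_ofReal hsq (ae_of_all _ fun x => sq_nonneg _)]
    exact ENNReal.ofReal_lt_top
  -- integrability of the three pieces on the product
  have h1 : Integrable (fun p : Sph n × Sph n => K p * f p.1 ^ 2) (μ.prod μ) := by
    have hm : Measurable fun p : Sph n × Sph n => K p * f p.1 ^ 2 :=
      hKmeas.mul ((hfmeas.comp measurable_fst).pow_const 2)
    refine ⟨hm.aestronglyMeasurable, ?_⟩
    rw [hasFiniteIntegral_iff_ofReal (ae_of_all _ fun p => mul_nonneg (hK0 p) (sq_nonneg _))]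
    have hof : Measurable fun p : Sph n × Sph n => ENNReal.ofReal (K p * f p.1 ^ 2) :=
      hm.ennreal_ofReal
    rw [MeasureTheory.lintegral_prod _ hof.aemeasurable]
    calc ∫⁻ v, ∫⁻ v', ENNReal.ofReal (K (v, v') * f v ^ 2) ∂μ ∂μ
        = ∫⁻ v, ENNReal.ofReal (f v ^ 2) ∂μ := by
          refine lintegral_congr fun v => ?_
          calc ∫⁻ v', ENNReal.ofReal (K (v, v') * f v ^ 2) ∂μ
              = ∫⁻ v', ENNReal.ofReal (K (v, v')) * ENNReal.ofReal (f v ^ 2) ∂μ :=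
                lintegral_congr fun v' => ENNReal.ofReal_mul (hK0 _)
            _ = ENNReal.ofReal (f v ^ 2) := by
                rw [lintegral_mul_const' _ _ ENNReal.ofReal_ne_top, hBlin v, one_mul]
      _ < ⊤ := hsqlin
  have h2 : Integrable (fun p : Sph n × Sph n => K p * f p.2 ^ 2) (μ.prod μ) := by
    have hm : Measurable fun p : Sph n × Sph n => K p * f p.2 ^ 2 :=
      hKmeas.mul ((hfmeas.comp measurable_snd).pow_const 2)
    refine ⟨hm.aestronglyMeasurable, ?_⟩
    rw [hasFiniteIntegral_iff_ofReal (ae_of_all _ fun p => mul_nonneg (hK0 p) (sq_nonneg _))]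
    have hof : Measurable fun p : Sph n × Sph n => ENNReal.ofReal (K p * f p.2 ^ 2) :=
      hm.ennreal_ofReal
    rw [MeasureTheory.lintegral_prod_symm' _ hof]
    calc ∫⁻ v', ∫⁻ v, ENNReal.ofReal (K (v, v') * f v' ^ 2) ∂μ ∂μ
        = ∫⁻ v', ENNReal.ofReal (f v' ^ 2) ∂μ := by
          refine lintegral_congr fun v' => ?_
          calc ∫⁻ v, ENNReal.ofReal (K (v, v') * f v' ^ 2) ∂μ
              = ∫⁻ v, ENNReal.ofReal (K (v, v')) * ENNReal.ofReal (f v' ^ 2) ∂μ :=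
                lintegral_congr fun v => ENNReal.ofReal_mul (hK0 _)
            _ = ENNReal.ofReal (f v' ^ 2) := by
                rw [lintegral_mul_const' _ _ ENNReal.ofReal_ne_top, hAlin v', one_mul]
      _ < ⊤ := hsqlin
  have hcross : Integrable (fun p : Sph n × Sph n => K p * (f p.1 * f p.2)) (μ.prod μ) := by
    have hm : Measurable fun p : Sph n × Sph n => K p * (f p.1 * f p.2) :=
      hKmeas.mul ((hfmeas.comp measurable_fst).mul (hfmeas.comp measurable_snd))
    refine (h1.add h2).mono hm.aestronglyMeasurable (ae_of_all _ fun p => ?_)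
    show ‖K p * (f p.1 * f p.2)‖ ≤ ‖K p * f p.1 ^ 2 + K p * f p.2 ^ 2‖
    have hKp := hK0 p
    have h2ab : 2 * |f p.1 * f p.2| ≤ f p.1 ^ 2 + f p.2 ^ 2 := by
      rw [abs_mul]
      nlinarith [abs_nonneg (f p.1), abs_nonneg (f p.2), sq_abs (f p.1), sq_abs (f p.2),
        sq_nonneg (|f p.1| - |f p.2|)]
    have hnn : 0 ≤ K p * f p.1 ^ 2 + K p * f p.2 ^ 2 :=
      add_nonneg (mul_nonneg hKp (sq_nonneg _)) (mul_nonneg hKp (sq_nonneg _))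
    simp only [Real.norm_eq_abs]
    rw [abs_of_nonneg hnn, abs_mul, abs_of_nonneg hKp]
    nlinarith [abs_nonneg (f p.1 * f p.2)]
  have hFint : Integrable (fun p : Sph n × Sph n => K p * (f p.1 - f p.2) ^ 2) (μ.prod μ) := by
    have heq : (fun p : Sph n × Sph n => K p * (f p.1 - f p.2) ^ 2) =
        fun p => (K p * f p.1 ^ 2 + K p * f p.2 ^ 2) - 2 * (K p * (f p.1 * f p.2)) := by
      funext p; ring
    rw [heq]
    exact (h1.add h2).sub (hcross.const_mul 2)
  -- the fixed point equation for `f`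
  have hfix' : ∀ᵐ v ∂μ, f v = ∫ v', K (v, v') * f v' ∂μ := by
    filter_upwards [hfix, hf] with v h1v h2v
    rw [← h2v, h1v]
    refine integral_congr_ae ?_
    filter_upwards [hf] with v' hv'
    rw [hv']
  -- the main identity : the integral of the nonnegative function is zero
  have Sq := ∫ x, f x ^ 2 ∂μ
  have hint1 : ∫ p, K p * f p.1 ^ 2 ∂(μ.prod μ) = ∫ x, f x ^ 2 ∂μ := by
    rw [MeasureTheory.integral_prod _ h1]
    refine integral_congr_ae (ae_of_all _ fun v => ?_)
    show (∫ v', K (v, v') * f v ^ 2 ∂μ) = f v ^ 2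
    rw [integral_mul_const, hB v, one_mul]
  have hint2 : ∫ p, K p * f p.2 ^ 2 ∂(μ.prod μ) = ∫ x, f x ^ 2 ∂μ := by
    rw [MeasureTheory.integral_prod_symm _ h2]
    refine integral_congr_ae (ae_of_all _ fun v' => ?_)
    show (∫ v, K (v, v') * f v' ^ 2 ∂μ) = f v' ^ 2
    rw [integral_mul_const, hA v', one_mul]
  have hint3 : ∫ p, K p * (f p.1 * f p.2) ∂(μ.prod μ) = ∫ x, f x ^ 2 ∂μ := by
    rw [MeasureTheory.integral_prod _ hcross]
    refine integral_congr_ae ?_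
    filter_upwards [hfix'] with v hv
    have : (fun v' => K (v, v') * (f v * f v')) = fun v' => f v * (K (v, v') * f v') := by
      funext v'; ring
    rw [this, integral_const_mul, ← hv]
    ring
  have hzero : ∫ p, K p * (f p.1 - f p.2) ^ 2 ∂(μ.prod μ) = 0 := by
    have heq : (fun p : Sph n × Sph n => K p * (f p.1 - f p.2) ^ 2) =
        fun p => (K p * f p.1 ^ 2 + K p * f p.2 ^ 2) - 2 * (K p * (f p.1 * f p.2)) := by
      funext p; ring
    have h12 : Integrable (fun p : Sph n × Sph n => K p * f p.1 ^ 2 + K p * f p.2 ^ 2)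
        (μ.prod μ) := h1.add h2
    rw [heq, integral_sub h12 (hcross.const_mul 2), integral_add h1 h2,
      MeasureTheory.integral_const_mul 2, hint1, hint2, hint3]
    ring
  -- conclude `f p.1 = f p.2` a.e. on the product
  have hae : ∀ᵐ p ∂(μ.prod μ), K p * (f p.1 - f p.2) ^ 2 = 0 :=
    (integral_eq_zero_iff_of_nonneg_ae
      (ae_of_all _ fun p => mul_nonneg (hK0 p) (sq_nonneg _)) hFint).mp hzero
  have hae' : ∀ᵐ p ∂(μ.prod μ), f p.1 = f p.2 := by
    filter_upwards [hae] with p hp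
    have hKne : K p ≠ 0 := ne_of_gt (lt_of_lt_of_le hσ0 (hKlb p))
    have := (mul_eq_zero.mp hp).resolve_left hKne
    have := pow_eq_zero_iff (n := 2) (by norm_num) |>.mp this
    linarith [this]
  obtain ⟨v, hv⟩ := (Measure.ae_ae_of_ae_prod hae').exists
  refine ⟨f v, hf.trans ?_⟩
  filter_upwards [hv] with v' hv'
  exact hv'.symm
end
end
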